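/- Let (T, V) be a rooted stable tree-decomposition of a connected graph G. Then for every node t of T such that the induced subgraph G[V_t] is disconnected, there exists a t-admissible path, i.e., a path in G contained in V_{T_t} joining two distinct components of G[V_t] that is shortest with these properties. -/

import Mathlib

open SimpleGraph

universe u

/-- `x` and `y` are joined by a walk in `G` all of whose vertices lie in `S`. -/
def ConnIn {V : Type u} (G : SimpleGraph V) (S : Set V) (x y : V) : Prop :=
  ∃ p : G.Walk x y, ∀ v ∈ p.support, v ∈ S

/-- `S` is a (nonempty) connected vertex set of `G`, i.e. `G[S]` is connected. -/
def IsConnSet {V : Type u} (G : SimpleGraph V) (S : Set V) : Prop :=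
  S.Nonempty ∧ ∀ x ∈ S, ∀ y ∈ S, ConnIn G S x y

/-- A tree-decomposition of `G` over the tree `T`. -/
structure TreeDecomp {V ι : Type u} (G : SimpleGraph V) (T : SimpleGraph ι) where
  isTree : T.IsTree
  bag : ι → Set V
  exists_bag : ∀ v : V, ∃ t, v ∈ bag t
  exists_bag_adj : ∀ ⦃u v : V⦄, G.Adj u v → ∃ t, u ∈ bag t ∧ v ∈ bag t
  bag_sep : ∀ ⦃t₁ t₃ : ι⦄ (p : T.Walk t₁ t₃), p.IsPath → ∀ t₂ ∈ p.support,
      bag t₁ ∩ bag t₃ ⊆ bag t₂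

/-- The union of the bags `B u` over `u ∈ A`. -/
def unionBags {V ι : Type u} (B : ι → Set V) (A : Set ι) : Set V := ⋃ u ∈ A, B u

/-- `s` is a descendant of `t` in the tree `T` rooted at `r`:
`t` lies on the (unique) `r`–`s` path. -/
def Desc {ι : Type u} (T : SimpleGraph ι) (r t s : ι) : Prop :=
  ∃ p : T.Walk r s, p.IsPath ∧ t ∈ p.support

/-- The set of descendants of `t` (the subtree `T_t`). -/
def descSet {ι : Type u} (T : SimpleGraph ι) (r t : ι) : Set ι := {s | Desc T r t s}

/-- `s` is a child of `t` in the tree `T` rooted at `r`. -/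
def IsChild {ι : Type u} (T : SimpleGraph ι) (r t s : ι) : Prop :=
  T.Adj t s ∧ Desc T r t s

/-- The vertex set of the component of `t₁` in `T` minus the edge `t₁t₂`. -/
def Side {ι : Type u} (T : SimpleGraph ι) (t₁ t₂ : ι) : Set ι :=
  {u | ∃ p : T.Walk u t₁, p.IsPath ∧ t₂ ∉ p.support}

/-- The family of bags `B` is stable: for every tree edge `t₁t₂`, both sides
induce connected subgraphs of `G`. -/
def StableBags {V ι : Type u} (G : SimpleGraph V) (T : SimpleGraph ι) (B : ι → Set V) : Prop :=
  ∀ ⦃t₁ t₂ : ι⦄, T.Adj t₁ t₂ → IsConnSet G (unionBags B (Side T t₁ t₂))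

def TreeDecomp.Stable {V ι : Type u} {G : SimpleGraph V} {T : SimpleGraph ι}
    (td : TreeDecomp G T) : Prop :=
  StableBags G T td.bag

/-- `P` is a `t`-admissible path (w.r.t. the root `r` and bags `B`): a shortest
path lying in `V_{T_t}` joining two distinct components of `G[B t]`. -/
structure IsAdmissible {V ι : Type u} (G : SimpleGraph V) (T : SimpleGraph ι)
    (B : ι → Set V) (r t : ι) {x y : V} (P : G.Walk x y) : Prop where
  isPath : P.IsPath
  support_sub : ∀ v ∈ P.support, v ∈ unionBags B (descSet T r t)
  fst_mem : x ∈ B t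
  snd_mem : y ∈ B t
  not_conn : ¬ ConnIn G (B t) x y
  minimal : ∀ ⦃x' y' : V⦄ (Q : G.Walk x' y'), Q.IsPath →
      (∀ v ∈ Q.support, v ∈ unionBags B (descSet T r t)) →
      x' ∈ B t → y' ∈ B t → ¬ ConnIn G (B t) x' y' → P.length ≤ Q.length

/-- The updated bags obtained by adding the path `P` as in `(*)`:
`W_u = V_u ∪ (V(P) ∩ V_{T_u})` for descendants `u` of `t`, and `W_u = V_u` otherwise. -/
def updatedBag {V ι : Type u} (T : SimpleGraph ι) (B : ι → Set V) (r t : ι)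
    {G : SimpleGraph V} {x y : V} (P : G.Walk x y) (u : ι) : Set V :=
  B u ∪ {v | Desc T r t u ∧ v ∈ P.support ∧ v ∈ unionBags B (descSet T r u)}

/-- The tree-width of `G`: the least `k` such that `G` has a tree-decomposition
all of whose bags have at most `k + 1` vertices. -/
noncomputable def treewidth {V : Type u} (G : SimpleGraph V) : ℕ :=
  sInf {k | ∃ (ι : Type u) (T : SimpleGraph ι) (td : TreeDecomp G T),
    ∀ t, (td.bag t).ncard ≤ k + 1}

/-- A tree-decomposition is connected if every bag is a connected vertex set. -/
def TreeDecomp.IsConn {V ι : Type u} {G : SimpleGraph V} {T : SimpleGraph ι}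
    (td : TreeDecomp G T) : Prop :=
  ∀ t, IsConnSet G (td.bag t)

/-- The connected tree-width of `G`. -/
noncomputable def ctw {V : Type u} (G : SimpleGraph V) : ℕ :=
  sInf {k | ∃ (ι : Type u) (T : SimpleGraph ι) (td : TreeDecomp G T),
    td.IsConn ∧ ∀ t, (td.bag t).ncard ≤ k + 1}

/-- The weak connected tree-width of `G`: the least `k` such that `G` has a
tree-decomposition each of whose bags is contained in a connected set of at
most `k + 1` vertices. -/
noncomputable def wctw {V : Type u} (G : SimpleGraph V) : ℕ :=
  sInf {k | ∃ (ι : Type u) (T : SimpleGraph ι) (td : TreeDecomp G T),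
    ∀ t, ∃ X, td.bag t ⊆ X ∧ IsConnSet G X ∧ X.ncard ≤ k + 1}

/-- The characteristic vector over GF(2) of the edge set of a walk. -/
noncomputable def walkChar {V : Type u} {G : SimpleGraph V} {x y : V}
    (p : G.Walk x y) : Sym2 V → ZMod 2 :=
  fun e => by classical exact if e ∈ p.edges then 1 else 0

/-- The characteristic vectors of the cycles of `G` of length at most `ℓ`. -/
def cycleChars {V : Type u} (G : SimpleGraph V) (ℓ : ℕ) : Set (Sym2 V → ZMod 2) :=
  {f | ∃ (v : V) (p : G.Walk v v), p.IsCycle ∧ p.length ≤ ℓ ∧ f = walkChar p}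

/-- The cycles of length at most `ℓ` generate the cycle space of `G` over GF(2). -/
def GeneratesLE {V : Type u} (G : SimpleGraph V) (ℓ : ℕ) : Prop :=
  ∀ ⦃v : V⦄ (p : G.Walk v v), p.IsCycle →
    walkChar p ∈ Submodule.span (ZMod 2) (cycleChars G ℓ)

/-- `ℓ(G)`: the least `ℓ` such that the cycles of length at most `ℓ`
generate the cycle space of `G`. -/
noncomputable def ellGraph {V : Type u} (G : SimpleGraph V) : ℕ :=
  sInf {ℓ | GeneratesLE G ℓ}

/-- `Γ` is a set of cycles of `G` generating its cycle space over GF(2). -/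
def GeneratesSet {V : Type u} (G : SimpleGraph V) (Γ : Set (Σ v : V, G.Walk v v)) : Prop :=
  (∀ c ∈ Γ, c.2.IsCycle) ∧
  ∀ ⦃v : V⦄ (p : G.Walk v v), p.IsCycle →
    walkChar p ∈ Submodule.span (ZMod 2) {f | ∃ c ∈ Γ, f = walkChar c.2}

/-- A bramble: a collection of connected vertex sets, any two of which have
connected union. -/
def IsBramble {V : Type u} (G : SimpleGraph V) (B : Set (Set V)) : Prop :=
  (∀ S ∈ B, IsConnSet G S) ∧ ∀ S ∈ B, ∀ S' ∈ B, IsConnSet G (S ∪ S')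

/-- `X` is a connected cover of the bramble `B`. -/
def IsConnCover {V : Type u} (G : SimpleGraph V) (B : Set (Set V)) (X : Set V) : Prop :=
  IsConnSet G X ∧ ∀ S ∈ B, (X ∩ S).Nonempty

/-- The connected order of a bramble: the least size of a connected cover. -/
noncomputable def connOrder {V : Type u} (G : SimpleGraph V) (B : Set (Set V)) : ℕ :=
  sInf {n | ∃ X, IsConnCover G B X ∧ X.ncard = n}

/-- The maximum connected order of a bramble of `G`. -/
noncomputable def cbn {V : Type u} (G : SimpleGraph V) : ℕ :=
  sSup {n | ∃ B, IsBramble G B ∧ connOrder G B = n}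

/-- A geodesic cycle: a cycle containing a shortest `G`-path between any two
of its vertices. -/
def IsGeodesicCycle {V : Type u} (G : SimpleGraph V) {v : V} (p : G.Walk v v) : Prop :=
  p.IsCycle ∧ ∀ x ∈ p.support, ∀ y ∈ p.support,
    ∃ q : G.Walk x y, q.length = G.dist x y ∧ ∀ e ∈ q.edges, e ∈ p.edges

/-- The graph obtained from `K_n` by subdividing every edge exactly `k` times:
the edge between `i < j` is replaced by the path
`i, ((i,j),0), ((i,j),1), …, ((i,j),k-1), j`. -/
def subK (n k : ℕ) : SimpleGraph (Fin n ⊕ ({p : Fin n × Fin n // p.1 < p.2} × Fin k)) :=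
  SimpleGraph.fromRel fun u v =>
    match u, v with
    | Sum.inl i, Sum.inl j => i < j ∧ k = 0
    | Sum.inl i, Sum.inr (e, c) =>
        (e.val.1 = i ∧ (c : ℕ) = 0) ∨ (e.val.2 = i ∧ (c : ℕ) = k - 1)
    | Sum.inr (e, c), Sum.inr (e', c') => e = e' ∧ (c' : ℕ) = (c : ℕ) + 1
    | _, _ => False

variable {V ι : Type u} {G : SimpleGraph V} {T : SimpleGraph ι}

lemma isPath_concat {u v w : ι} {p : T.Walk u v} (hp : p.IsPath) (h : T.Adj v w)
    (hw : w ∉ p.support) : (p.concat h).IsPath := by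
  rw [← Walk.isPath_reverse_iff, Walk.reverse_concat]
  exact (hp.reverse).cons (by rwa [Walk.support_reverse, List.mem_reverse])

lemma side_subset_descSet (hT : T.IsTree) {r t t' : ι} (w : T.Walk r t') (hw : w.IsPath)
    (ht : t ∉ w.support) (hadj : T.Adj t' t) : Side T t t' ⊆ descSet T r t := by
  intro s hs
  obtain ⟨p, hp, hp'⟩ := hs
  classical
  have hq1 : (w.concat hadj).IsPath := isPath_concat hw hadj ht
  -- the appended walk r → t → s
  refine ⟨(w.concat hadj).append p.reverse, ?_, ?_⟩
  · rw [Walk.isPath_def, Walk.support_append, List.nodup_append]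
    refine ⟨hq1.support_nodup, (hp.reverse.support_nodup).tail, ?_⟩
    intro u hu u2 hu2 hu2e; subst hu2e
    -- u ∈ p.support and u ≠ t
    have hps : p.reverse.support = t :: p.reverse.support.tail :=
      p.reverse.support_eq_cons
    have hut : u ≠ t := by
      intro h; subst h
      have := hp.reverse.support_nodup
      rw [hps] at this
      exact (List.nodup_cons.mp this).1 hu2
    have hup : u ∈ p.support := by
      have : u ∈ p.reverse.support := hps ▸ List.mem_cons_of_mem _ hu2
      rwa [Walk.support_reverse, List.mem_reverse] at this
    have huw : u ∈ w.support := by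
      rw [Walk.support_concat, List.mem_append] at hu
      rcases hu with h | h
      · exact h
      · simp at h; exact absurd h hut
    -- two distinct u–t paths
    have hA : ((w.dropUntil u huw).concat hadj).IsPath :=
      isPath_concat (hw.dropUntil huw) hadj
        (fun h => ht (w.support_dropUntil_subset huw h))
    have hB : (p.dropUntil u hup).IsPath := hp.dropUntil hup
    have heq := isAcyclic_iff_path_unique.mp hT.IsAcyclic
      ⟨(w.dropUntil u huw).concat hadj, hA⟩ ⟨p.dropUntil u hup, hB⟩
    have heq' : (w.dropUntil u huw).concat hadj = p.dropUntil u hup :=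
      congrArg Subtype.val heq
    have ht'A : t' ∈ ((w.dropUntil u huw).concat hadj).support := by
      rw [Walk.support_concat, List.mem_append]
      exact Or.inl (w.dropUntil u huw).end_mem_support
    rw [heq'] at ht'A
    exact hp' (p.support_dropUntil_subset hup ht'A)
  · rw [Walk.mem_support_append_iff]
    left
    rw [Walk.support_concat]
    simp


/-- in a rooted stable tree-decomposition of a connected graph,
every node with disconnected bag has an admissible path. -/
theorem exists_admissible_path {V ι : Type u} (G : SimpleGraph V) (hG : G.Connected)
    (T : SimpleGraph ι) (td : TreeDecomp G T) (hst : td.Stable) (r t : ι)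
    (hdis : ∃ x ∈ td.bag t, ∃ y ∈ td.bag t, ¬ ConnIn G (td.bag t) x y) :
    ∃ (x y : V) (P : G.Walk x y), IsAdmissible G T td.bag r t P := by
  classical
  obtain ⟨x, hx, y, hy, hxy⟩ := hdis
  have step1 : ∃ Q : G.Walk x y, ∀ v ∈ Q.support,
      v ∈ unionBags td.bag (descSet T r t) := by
    by_cases hrt : r = t
    · subst hrt
      have hSuniv : ∀ v : V, v ∈ unionBags td.bag (descSet T r r) := by
        intro v
        obtain ⟨t0, ht0⟩ := td.exists_bag v
        have hd : Desc T r r t0 := by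
          obtain ⟨q, hq, -⟩ := td.isTree.existsUnique_path r t0
          exact ⟨q, hq, q.start_mem_support⟩
        exact Set.mem_biUnion hd ht0
      obtain ⟨Q⟩ := hG.preconnected x y
      exact ⟨Q, fun v _ => hSuniv v⟩
    · obtain ⟨q0, hq0, -⟩ := td.isTree.existsUnique_path r t
      cases q0 with
      | nil => exact absurd rfl hrt
      | cons h p =>
        obtain ⟨t', w, hadj, hEq⟩ := Walk.exists_cons_eq_concat h p
        rw [hEq] at hq0
        have hwPath : w.IsPath := by
          rw [Walk.concat_eq_append] at hq0
          exact hq0.of_append_left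
        have htw : t ∉ w.support := by
          have h2 := hq0.support_nodup
          rw [Walk.support_concat, List.nodup_append] at h2
          exact fun hmem => h2.2.2 t hmem t (by simp) rfl
        have hsub : Side T t t' ⊆ descSet T r t :=
          side_subset_descSet td.isTree w hwPath htw hadj
        have hsub2 : unionBags td.bag (Side T t t') ⊆
            unionBags td.bag (descSet T r t) :=
          Set.biUnion_subset_biUnion_left hsub
        have htSide : t ∈ Side T t t' :=
          ⟨Walk.nil, Walk.IsPath.nil, by simp [Walk.support_nil, hadj.ne]⟩
        have hconn := (hst hadj.symm).2 x (Set.mem_biUnion htSide hx)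
          y (Set.mem_biUnion htSide hy)
        obtain ⟨Q, hQ⟩ := hconn
        exact ⟨Q, fun v hv => hsub2 (hQ v hv)⟩
  obtain ⟨Q0, hQ0⟩ := step1
  let L : Set ℕ := {n | ∃ (x' y' : V) (Q : G.Walk x' y'), Q.IsPath ∧
    (∀ v ∈ Q.support, v ∈ unionBags td.bag (descSet T r t)) ∧
    x' ∈ td.bag t ∧ y' ∈ td.bag t ∧ ¬ ConnIn G (td.bag t) x' y' ∧ Q.length = n}
  have hLne : Q0.bypass.length ∈ L :=
    ⟨x, y, Q0.bypass, Q0.bypass_isPath,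
      fun v hv => hQ0 v (Q0.support_bypass_subset hv), hx, hy, hxy, rfl⟩
  obtain ⟨x0, y0, P, hP1, hP2, hP3, hP4, hP5, hP6⟩ := Nat.sInf_mem ⟨_, hLne⟩
  refine ⟨x0, y0, P, hP1, hP2, hP3, hP4, hP5, ?_⟩
  intro x' y' Q hQp hQs hx' hy' hnc
  exact le_trans (le_of_eq hP6)
    (Nat.sInf_le ⟨x', y', Q, hQp, hQs, hx', hy', hnc, rfl⟩)
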